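/- There are infinitely many nondegenerate codimension-3 degree sequences D = (0, x, y, z) (integers 0 < x < y < z with gcd(x, y, z) = 1) such that B_1(D) = 2; in particular, the set of such degree sequences, each of the form (0, x, y, y + 1), is infinite. -/

import Mathlib

/-- `π_1` of the codimension-3 degree sequence `(0, x, y, z)`. -/
noncomputable def piOne (x y z : ℤ) : ℚ := ((y * z : ℤ) : ℚ) / (((y - x) * (z - x) : ℤ) : ℚ)

/-- `π_2` of the codimension-3 degree sequence `(0, x, y, z)`. -/
noncomputable def piTwo (x y z : ℤ) : ℚ := ((x * z : ℤ) : ℚ) / (((y - x) * (z - y) : ℤ) : ℚ)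

/-- `π_3` of the codimension-3 degree sequence `(0, x, y, z)`. -/
noncomputable def piThree (x y z : ℤ) : ℚ := ((x * y : ℤ) : ℚ) / (((z - x) * (z - y) : ℤ) : ℚ)

/-- `B_1(D) = 2` for the codimension-3 degree sequence `D = (0, x, y, z)`:
the least positive integer `L` making all `L·π_i(D)` integers satisfies
`L·π_1(D) = 2`. -/
def BOneEqTwo (x y z : ℤ) : Prop :=
  ∃ L : ℕ, IsLeast {L' : ℕ | 0 < L' ∧
      (∃ n : ℤ, (L' : ℚ) * piOne x y z = n) ∧
      (∃ n : ℤ, (L' : ℚ) * piTwo x y z = n) ∧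
      (∃ n : ℤ, (L' : ℚ) * piThree x y z = n)} L ∧
    (L : ℚ) * piOne x y z = 2


lemma BOneEqTwo_of (x y z : ℤ) (hxy : x < y) (hyz : y < z)
    (h1 : y * z = 2 * ((y - x) * (z - x)))
    (h2 : (y - x) * (z - y) ∣ x * z) (h3 : (z - x) * (z - y) ∣ x * y) :
    BOneEqTwo x y z := by
  have hxz : x < z := hxy.trans hyz
  have hd1 : ((((y - x) * (z - x) : ℤ)) : ℚ) ≠ 0 := by
    have h : (0:ℤ) < (y - x) * (z - x) := mul_pos (by omega) (by omega)
    exact_mod_cast h.ne'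
  have hd2 : ((((y - x) * (z - y) : ℤ)) : ℚ) ≠ 0 := by
    have h : (0:ℤ) < (y - x) * (z - y) := mul_pos (by omega) (by omega)
    exact_mod_cast h.ne'
  have hd3 : ((((z - x) * (z - y) : ℤ)) : ℚ) ≠ 0 := by
    have h : (0:ℤ) < (z - x) * (z - y) := mul_pos (by omega) (by omega)
    exact_mod_cast h.ne'
  have hp1 : piOne x y z = 2 := by
    rw [piOne, div_eq_iff hd1]
    exact_mod_cast h1
  obtain ⟨k2, hk2⟩ := h2
  have hp2 : piTwo x y z = (k2 : ℚ) := by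
    rw [piTwo, div_eq_iff hd2, hk2]
    push_cast; ring
  obtain ⟨k3, hk3⟩ := h3
  have hp3 : piThree x y z = (k3 : ℚ) := by
    rw [piThree, div_eq_iff hd3, hk3]
    push_cast; ring
  refine ⟨1, ⟨⟨one_pos, ⟨2, ?_⟩, ⟨k2, ?_⟩, ⟨k3, ?_⟩⟩, fun L' hL' => hL'.1⟩, ?_⟩ <;>
    simp [hp1, hp2, hp3]

lemma of_BOneEqTwo (x y z : ℤ) (hx : 0 < x) (hxy : x < y) (hyz : y < z)
    (hB : BOneEqTwo x y z) :
    y * z = 2 * ((y - x) * (z - x)) ∧ (y - x) * (z - y) ∣ x * z ∧ (z - x) * (z - y) ∣ x * y := by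
  have hxz : x < z := hxy.trans hyz
  have hd1 : (0:ℤ) < (y - x) * (z - x) := mul_pos (by omega) (by omega)
  have hd2 : (0:ℤ) < (y - x) * (z - y) := mul_pos (by omega) (by omega)
  have hd3 : (0:ℤ) < (z - x) * (z - y) := mul_pos (by omega) (by omega)
  obtain ⟨L, ⟨⟨hL0, hn1, hn2, hn3⟩, _⟩, hL2⟩ := hB
  have key : (L : ℤ) * (y * z) = 2 * ((y - x) * (z - x)) := by
    rw [piOne, ← mul_div_assoc, div_eq_iff (by exact_mod_cast hd1.ne')] at hL2
    exact_mod_cast hL2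
  -- y*z > d1
  have hgt : (y - x) * (z - x) < y * z := by nlinarith
  have hL1 : L = 1 := by
    have hL1' : 1 ≤ (L:ℤ) := by exact_mod_cast hL0
    nlinarith
  subst hL1
  have h1 : y * z = 2 * ((y - x) * (z - x)) := by simpa using key
  refine ⟨h1, ?_, ?_⟩
  · obtain ⟨n, hn⟩ := hn2
    refine ⟨n, ?_⟩
    rw [piTwo, ← mul_div_assoc, div_eq_iff (by exact_mod_cast hd2.ne')] at hn
    have h' : ((x*z : ℤ) : ℚ) = ((n * ((y-x)*(z-y)) : ℤ) : ℚ) := by push_cast at hn ⊢; linarith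
    have h'' : x * z = n * ((y-x)*(z-y)) := by exact_mod_cast h'
    linear_combination h''
  · obtain ⟨n, hn⟩ := hn3
    refine ⟨n, ?_⟩
    rw [piThree, ← mul_div_assoc, div_eq_iff (by exact_mod_cast hd3.ne')] at hn
    have h' : ((x*y : ℤ) : ℚ) = ((n * ((z-x)*(z-y)) : ℤ) : ℚ) := by push_cast at hn ⊢; linarith
    have h'' : x * y = n * ((z-x)*(z-y)) := by exact_mod_cast h'
    linear_combination h''

lemma z_forced (x y z : ℤ) (hx : 0 < x) (hxy : x < y) (hyz : y < z)
    (hg : Int.gcd x (Int.gcd y z) = 1)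
    (h1 : y * z = 2 * ((y - x) * (z - x)))
    (h3 : (z - x) * (z - y) ∣ x * y) : z = y + 1 := by
  by_contra hne
  have hb2 : 2 ≤ z - y := by omega
  obtain ⟨p, hp, hpd⟩ := Nat.exists_prime_and_dvd (n := (z - y).natAbs) (by omega)
  have hpz : (p : ℤ) ∣ z - y := (Int.natCast_dvd_natCast.mpr hpd).trans (Int.natAbs_dvd.mpr dvd_rfl)
  have hpprime : Prime (p : ℤ) := Nat.prime_iff_prime_int.mp hp
  have hdxy : (p : ℤ) ∣ x * y := Dvd.dvd.trans (hpz.mul_left (z - x)) h3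
  have hkey : (p : ℤ) ∣ y^2 - 2*(y-x)^2 := by
    obtain ⟨c, hc⟩ := hpz
    exact ⟨c * (2*(y-x) - y), by linear_combination (2*(y-x) - y) * hc + h1⟩
  -- if p ∣ x and p ∣ y then contradiction with gcd = 1
  have hgcd : (p:ℤ) ∣ x → (p:ℤ) ∣ y → False := by
    intro hpx hpy
    have hpzz : (p : ℤ) ∣ z := by
      have := dvd_add hpz hpy; simpa using this
    have : (p:ℤ) ∣ (Int.gcd x (Int.gcd y z) : ℤ) :=
      Int.dvd_coe_gcd hpx (Int.dvd_coe_gcd hpy hpzz)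
    rw [hg] at this
    have hp1 : (p:ℤ) = 1 := Int.eq_one_of_dvd_one (by positivity) this
    have hp1' : p = 1 := by exact_mod_cast hp1
    exact hp.ne_one hp1'
  -- case split on p ∣ x or p ∣ y
  rcases hpprime.dvd_mul.mp hdxy with hpx | hpy
  · -- p ∣ x : then y² ≡ 2a², a ≡ y mod p ⇒ p ∣ y
    have hpy : (p:ℤ) ∣ y := by
      have h2 : (p:ℤ) ∣ y^2 := by
        have h' : y^2 = -(y^2-2*(y-x)^2) + (4*x)*y - (2*x)*x := by ring
        rw [h']
        exact dvd_sub (dvd_add (dvd_neg.mpr hkey) ((hpx.mul_left 4).mul_right y)) ((hpx.mul_left 2).mul_right x)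
      exact hpprime.dvd_of_dvd_pow h2
    exact hgcd hpx hpy
  · -- p ∣ y
    by_cases hp2 : p = 2
    · -- p = 2 : parity contradiction
      subst hp2
      by_cases hpx : (2:ℤ) ∣ x
      · exact hgcd (by exact_mod_cast hpx) (by exact_mod_cast hpy)
      · have hy2 : (2:ℤ) ∣ y := by exact_mod_cast hpy
        have hz2 : (2:ℤ) ∣ z := by have := dvd_add (by exact_mod_cast hpz : (2:ℤ) ∣ z - y) hy2; simpa using this
        have ha : ¬ (2:ℤ) ∣ (y - x) := by omega
        have hc : ¬ (2:ℤ) ∣ (z - x) := by omega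
        have h4 : (4:ℤ) ∣ y * z := mul_dvd_mul hy2 hz2
        -- y*z = 2*(odd*odd), so 2 ∣ (y-x)*(z-x)
        have : (2:ℤ) ∣ (y-x)*(z-x) := by
          obtain ⟨k, hk⟩ := h4
          exact ⟨k, by linarith [h1, hk]⟩
        rcases Int.prime_two.dvd_mul.mp this with h | h
        · exact ha h
        · exact hc h
    · -- p odd : p ∣ 2a² ⇒ p ∣ a ⇒ p ∣ x
      have hpa : (p:ℤ) ∣ (y - x) := by
        have h2 : (p:ℤ) ∣ 2 * (y-x)^2 := by
          have h' : 2 * (y-x)^2 = -(y^2-2*(y-x)^2) + y*y := by ring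
          rw [h']
          exact dvd_add (dvd_neg.mpr hkey) (hpy.mul_right y)
        rcases hpprime.dvd_mul.mp h2 with h | h
        · exfalso
          have hpn : p ∣ 2 := by exact_mod_cast h
          have := (Nat.prime_dvd_prime_iff_eq hp Nat.prime_two).mp hpn
          exact hp2 this
        · exact hpprime.dvd_of_dvd_pow h
      have hpx : (p:ℤ) ∣ x := by have := dvd_sub hpy hpa; simpa using this
      exact hgcd hpx hpy

def pell : ℕ → ℤ × ℤ
  | 0 => (3, 2)
  | n+1 => (3 * (pell n).1 + 4 * (pell n).2 + 3, 2 * (pell n).1 + 3 * (pell n).2 + 2)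

lemma pell_bounds (n : ℕ) : 0 < (pell n).2 ∧ (pell n).2 < (pell n).1 := by
  induction n with
  | zero => simp [pell]
  | succ n ih => simp only [pell]; omega

lemma pell_inv (n : ℕ) : (pell n).1 * ((pell n).1 + 1) = 2 * ((pell n).2 * ((pell n).2 + 1)) := by
  induction n with
  | zero => simp [pell]
  | succ n ih => simp only [pell]; ring_nf; ring_nf at ih; linarith

lemma pell_mono : StrictMono (fun n => (pell n).1) := by
  apply strictMono_nat_of_lt_succ
  intro n
  have h := pell_bounds n
  simp only [pell]
  omega

lemma int_gcd_self_succ (y : ℤ) : Int.gcd y (y + 1) = 1 := by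
  have : IsCoprime y (y + 1) := ⟨-1, 1, by ring⟩
  exact Int.isCoprime_iff_gcd_eq_one.mp this

/-- There are infinitely many nondegenerate codimension-3 degree sequences
`D = (0, x, y, z)` with `B_1(D) = 2`; moreover each such `D` has `z = y + 1`. -/
theorem infinitely_many_B_one_eq_two :
    {p : ℤ × ℤ × ℤ | 0 < p.1 ∧ p.1 < p.2.1 ∧ p.2.1 < p.2.2 ∧
      Int.gcd p.1 (Int.gcd p.2.1 p.2.2) = 1 ∧
      BOneEqTwo p.1 p.2.1 p.2.2}.Infinite ∧
    ∀ p : ℤ × ℤ × ℤ, 0 < p.1 → p.1 < p.2.1 → p.2.1 < p.2.2 →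
      Int.gcd p.1 (Int.gcd p.2.1 p.2.2) = 1 →
      BOneEqTwo p.1 p.2.1 p.2.2 → p.2.2 = p.2.1 + 1 := by
  constructor
  · apply Set.infinite_of_injective_forall_mem
      (f := fun n : ℕ => (((pell n).1 - (pell n).2, (pell n).1, (pell n).1 + 1) : ℤ × ℤ × ℤ))
    · intro a b hab
      simp only [Prod.mk.injEq] at hab
      exact pell_mono.injective hab.2.1
    · intro n
      obtain ⟨hm0, hmy⟩ := pell_bounds n
      have hinv := pell_inv n
      set y := (pell n).1 with hy
      set m := (pell n).2 with hmdef
      refine ⟨by simpa using hmy, by simpa using hm0, by simp, ?_, ?_⟩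
      · show Int.gcd (y - m) (Int.gcd y (y + 1)) = 1
        rw [int_gcd_self_succ y]
        simp
      · show BOneEqTwo (y - m) y (y + 1)
        apply BOneEqTwo_of _ _ _ (by omega) (by omega)
        · linear_combination hinv
        · exact ⟨2*(m+1)-(y+1), by linear_combination hinv⟩
        · exact ⟨2*m - y, by linear_combination hinv⟩
  · rintro ⟨x, y, z⟩ hx hxy hyz hg hB
    obtain ⟨h1, h2, h3⟩ := of_BOneEqTwo x y z hx hxy hyz hB
    exact z_forced x y z hx hxy hyz hg h1 h3
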